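/- Let Γ be the collection of all open subsets of Cantor space 2^ω. Then CSN(Γ) ≥ cov(M), where cov(M) is the least cardinality of a family of meager subsets of 2^ω whose union is all of 2^ω. -/

import Mathlib

open Cardinal Set

/-- Cantor space `2^ω`. -/
abbrev Cantor : Type := ℕ → Bool

/-- `F` is a family witnessing the Cofinal Selection Number for `Γ`. -/
def CSNFamily (Γ : Set (Set Cantor)) (F : Set ((ℕ → Cantor) × (ℕ → Cantor))) : Prop :=
  (∀ p ∈ F, Dense (Set.range p.1 ∪ Set.range p.2)) ∧
  (∀ p ∈ F, ∀ q ∈ F, p.2 ≠ q.2 → Set.range p.2 ∩ Set.range q.2 = ∅) ∧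
  (∀ p ∈ F, ∀ n : ℕ, p.1 n ≠ p.2 n) ∧
  (∀ A ∈ Γ, #(↥{p ∈ F | {n : ℕ | Xor' (p.1 n ∈ A) (p.2 n ∈ A)}.Infinite}) < #(↥F))

/- The Cofinal Selection Number of `Γ`: the least cardinality of a CSN family for `Γ`,
or `(2^ℵ₀)⁺` if there is no such family. -/
open Classical in
noncomputable def CSN (Γ : Set (Set Cantor)) : Cardinal :=
  if ∃ F, CSNFamily Γ F then
    sInf {c : Cardinal | ∃ F, CSNFamily Γ F ∧ #(↥F) = c}
  else Order.succ (2 ^ ℵ₀)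

/-- `cov(M)`: the least cardinality of a family of meager subsets of Cantor space whose
union is the whole space. -/
noncomputable def covMeager : Cardinal :=
  sInf {c : Cardinal | ∃ 𝒜 : Set (Set Cantor),
    (∀ A ∈ 𝒜, IsMeagre A) ∧ ⋃₀ 𝒜 = Set.univ ∧ #(↥𝒜) = c}

/-! ### Auxiliary machinery -/

namespace CSNProof

/-- The basic clopen cylinder determined by the first `k` values of `y`. -/
def cyl (y : Cantor) (k : ℕ) : Set Cantor := {z | ∀ i < k, z i = y i}

lemma self_mem_cyl (y : Cantor) (k : ℕ) : y ∈ cyl y k := fun _ _ => rfl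

lemma isOpen_cyl (y : Cantor) (k : ℕ) : IsOpen (cyl y k) := by
  have h : cyl y k = ⋂ i ∈ Finset.range k, ((fun z : Cantor => z i) ⁻¹' {y i}) := by
    ext z; simp [cyl, Finset.mem_range]
  rw [h]
  exact isOpen_biInter_finset fun i _ =>
    (continuous_apply i).isOpen_preimage _ (isOpen_discrete _)

lemma exists_cyl_subset {s : Set Cantor} (hs : IsOpen s) {y : Cantor} (hy : y ∈ s) :
    ∃ j, cyl y j ⊆ s := by
  obtain ⟨I, u, hu, hsub⟩ := isOpen_pi_iff.mp hs y hy
  refine ⟨I.sup id + 1, fun z hz => hsub ?_⟩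
  intro a ha
  have haI : a ∈ I := ha
  have : z a = y a := hz a (Nat.lt_succ_of_le (Finset.le_sup (f := id) haI))
  rw [this]
  exact (hu a haI).2

/-- The open set coded by `x`: all `z` whose first disagreement with `x` occurs at an
even coordinate. -/
def Acell (x : Cantor) : Set Cantor :=
  {z | ∃ k, Even k ∧ (∀ i < k, z i = x i) ∧ z k ≠ x k}

lemma isOpen_Acell (x : Cantor) : IsOpen (Acell x) := by
  have h : Acell x = ⋃ k ∈ {k : ℕ | Even k},
      (cyl x k ∩ ((fun z : Cantor => z k) ⁻¹' {x k}ᶜ)) := by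
    ext z
    simp only [Acell, mem_setOf_eq, mem_iUnion, mem_inter_iff, cyl, mem_preimage,
      mem_compl_iff, mem_singleton_iff, exists_prop]
  rw [h]
  exact isOpen_biUnion fun k _ =>
    (isOpen_cyl x k).inter ((continuous_apply k).isOpen_preimage _ (isOpen_discrete _))

lemma mem_Acell_iff {x z : Cantor} {k : ℕ} (h1 : ∀ i < k, z i = x i) (h2 : z k ≠ x k) :
    z ∈ Acell x ↔ Even k := by
  constructor
  · rintro ⟨k', hk', ha, hd⟩
    have hkk : k' = k := by
      rcases lt_trichotomy k' k with h | h | h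
      · exact absurd (h1 k' h) hd
      · exact h
      · exact absurd (ha k h) h2
    rwa [hkk] at hk'
  · exact fun he => ⟨k, he, h1, h2⟩

/-- One can refine any cylinder to avoid a given finite set of points. -/
lemma avoid {S : Set Cantor} (hS : S.Finite) (y : Cantor) (j : ℕ) :
    ∃ y' k, j ≤ k ∧ (∀ i < j, y' i = y i) ∧ ∀ e ∈ S, e ∉ cyl y' k := by
  refine Set.Finite.induction_on
    (motive := fun S _ => ∃ y' k, j ≤ k ∧ (∀ i < j, y' i = y i) ∧ ∀ e ∈ S, e ∉ cyl y' k) S hS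
    ⟨y, j, le_rfl, fun _ _ => rfl, fun e he => absurd he (notMem_empty e)⟩ ?_
  intro a s _ _ ih
  obtain ⟨y', k, hjk, hagree, havoid⟩ := ih
  by_cases ha : a ∈ cyl y' k
  · refine ⟨Function.update y' k (!(a k)), k + 1, le_trans hjk (Nat.le_succ k), ?_, ?_⟩
    · intro i hi
      rw [Function.update_of_ne (Nat.ne_of_lt (lt_of_lt_of_le hi hjk))]
      exact hagree i hi
    · have hsub : cyl (Function.update y' k (!(a k))) (k + 1) ⊆ cyl y' k := by
        intro z hz i hi
        rw [hz i (lt_trans hi (Nat.lt_succ_self k)),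
          Function.update_of_ne (Nat.ne_of_lt hi)]
      rintro e (rfl | he)
      · intro hmem
        have := hmem k (Nat.lt_succ_self k)
        rw [Function.update_self] at this
        simp at this
      · exact fun hmem => havoid e he (hsub hmem)
  · refine ⟨y', k, hjk, hagree, ?_⟩
    rintro e (rfl | he)
    · exact ha
    · exact havoid e he

/-- Core combinatorial step: given two distinct points `c, c'` with `c` in a given
cylinder, one can fix finitely many values of the code `x` to force exactly one of
`c, c'` to lie in `Acell x`. -/
lemma split_pair {c c' y' : Cantor} {k' : ℕ} (hne : c ≠ c') (hc : ∀ i < k', c i = y' i) :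
    ∃ (x : Cantor) (K : ℕ), k' ≤ K ∧ (∀ i < k', x i = y' i) ∧
      ∀ x'' : Cantor, (∀ i < K, x'' i = x i) → Xor' (c ∈ Acell x'') (c' ∈ Acell x'') := by
  have hex : ∃ i, c i ≠ c' i := by
    by_contra h; push_neg at h; exact hne (funext h)
  set k₀ := Nat.find hex with hk₀def
  have hk₀d : c k₀ ≠ c' k₀ := Nat.find_spec hex
  have hk₀min : ∀ i < k₀, c i = c' i := fun i hi => not_not.mp (Nat.find_min hex hi)
  set M := max k' k₀ with hMdef
  set K := if Even k₀ then 2 * M + 1 else 2 * M + 2 with hKdef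
  have hKpar : Even K ↔ ¬ Even k₀ := by
    by_cases h : Even k₀ <;> simp [hKdef, h, Nat.even_add_one, parity_simps]
  have hk'K : k' ≤ K := by
    have h1 : k' ≤ M := le_max_left _ _
    have h2 : M ≤ 2 * M + 1 := by omega
    have h3 : 2 * M + 1 ≤ K := by
      by_cases h : Even k₀ <;> simp [hKdef, h]
    omega
  have hk₀K : k₀ < K := by
    have h1 : k₀ ≤ M := le_max_right _ _
    have h3 : 2 * M + 1 ≤ K := by
      by_cases h : Even k₀ <;> simp [hKdef, h]
    omega
  set x : Cantor := fun i => if i = K then !(c K) else if i < k' then y' i else c i with hxdef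
  have hxc : ∀ i < K, x i = c i := by
    intro i hi
    simp only [hxdef]
    rw [if_neg (Nat.ne_of_lt hi)]
    split_ifs with h
    · exact (hc i h).symm
    · rfl
  have hxK : x K ≠ c K := by
    simp only [hxdef, if_pos rfl]
    simp
  refine ⟨x, K + 1, le_trans hk'K (Nat.le_succ K), ?_, ?_⟩
  · intro i hi
    simp only [hxdef]
    rw [if_neg (Nat.ne_of_lt (lt_of_lt_of_le hi hk'K)), if_pos hi]
  · intro x'' hx''
    have hcmem : c ∈ Acell x'' ↔ Even K := by
      refine mem_Acell_iff (fun i hi => ?_) ?_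
      · rw [hx'' i (lt_trans hi (Nat.lt_succ_self K)), hxc i hi]
      · rw [hx'' K (Nat.lt_succ_self K)]
        exact fun h => hxK h.symm
    have hc'mem : c' ∈ Acell x'' ↔ Even k₀ := by
      refine mem_Acell_iff (fun i hi => ?_) ?_
      · rw [hx'' i (lt_trans (lt_trans hi hk₀K) (Nat.lt_succ_self K)),
          hxc i (lt_trans hi hk₀K), ← hk₀min i hi]
      · rw [hx'' k₀ (lt_trans hk₀K (Nat.lt_succ_self K)), hxc k₀ hk₀K]
        exact fun h => hk₀d h.symm
    by_cases h : Even k₀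
    · exact Or.inr ⟨hc'mem.mpr h, fun hcm => (hKpar.mp (hcmem.mp hcm)) h⟩
    · exact Or.inl ⟨hcmem.mpr (hKpar.mpr h), fun hcm => h (hc'mem.mp hcm)⟩

/-- The forcing step: inside any cylinder we can fix a finite condition on the code `x``
forcing some `n ≥ m` to be split by `Acell x`. -/
lemma key_force {f g : ℕ → Cantor} (hd : Dense (Set.range f ∪ Set.range g))
    (hfg : ∀ n, f n ≠ g n) (m j : ℕ) (y : Cantor) :
    ∃ (x : Cantor) (K : ℕ), j ≤ K ∧ (∀ i < j, x i = y i) ∧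
      ∀ x'' : Cantor, (∀ i < K, x'' i = x i) →
        ∃ n, m ≤ n ∧ Xor' (f n ∈ Acell x'') (g n ∈ Acell x'') := by
  have hEfin : ((f '' Set.Iio m) ∪ (g '' Set.Iio m)).Finite :=
    ((Set.finite_Iio m).image f).union ((Set.finite_Iio m).image g)
  obtain ⟨y', k', hjk', hagree, havoid⟩ := avoid hEfin y j
  obtain ⟨d, hdmem, hdcyl⟩ :=
    hd.exists_mem_open (isOpen_cyl y' k') ⟨y', self_mem_cyl y' k'⟩
  rcases hdmem with ⟨n, rfl⟩ | ⟨n, rfl⟩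
  · -- d = f n
    have hnm : m ≤ n := by
      by_contra h
      exact havoid (f n) (Or.inl ⟨n, by simp only [Set.mem_Iio]; omega, rfl⟩) hdcyl
    obtain ⟨x, K, hk'K, hxy', hforce⟩ := split_pair (hfg n) hdcyl
    refine ⟨x, K, le_trans hjk' hk'K, ?_, ?_⟩
    · intro i hi
      rw [hxy' i (lt_of_lt_of_le hi hjk'), hagree i hi]
    · exact fun x'' hx'' => ⟨n, hnm, hforce x'' hx''⟩
  · -- d = g n
    have hnm : m ≤ n := by
      by_contra h
      exact havoid (g n) (Or.inr ⟨n, by simp only [Set.mem_Iio]; omega, rfl⟩) hdcyl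
    obtain ⟨x, K, hk'K, hxy', hforce⟩ := split_pair (Ne.symm (hfg n)) hdcyl
    refine ⟨x, K, le_trans hjk' hk'K, ?_, ?_⟩
    · intro i hi
      rw [hxy' i (lt_of_lt_of_le hi hjk'), hagree i hi]
    · intro x'' hx''
      refine ⟨n, hnm, ?_⟩
      rw [Xor', xor_comm]
      exact hforce x'' hx''

/-- The set of codes `x` such that no `n ≥ m` is split by `Acell x`. -/
def Cset (f g : ℕ → Cantor) (m : ℕ) : Set Cantor :=
  {x | ∀ n, m ≤ n → ¬ Xor' (f n ∈ Acell x) (g n ∈ Acell x)}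

lemma nwd_Cset {f g : ℕ → Cantor} (hd : Dense (Set.range f ∪ Set.range g))
    (hfg : ∀ n, f n ≠ g n) (m : ℕ) : IsNowhereDense (Cset f g m) := by
  rw [IsNowhereDense, Set.eq_empty_iff_forall_notMem]
  intro y hy
  obtain ⟨j, hj⟩ := exists_cyl_subset isOpen_interior hy
  obtain ⟨x, K, hjK, hxy, hforce⟩ := key_force hd hfg m j y
  have hxcl : x ∈ closure (Cset f g m) :=
    interior_subset (hj fun i hi => hxy i hi)
  obtain ⟨x'', hx''cyl, hx''C⟩ :=
    mem_closure_iff.mp hxcl (cyl x K) (isOpen_cyl x K) (self_mem_cyl x K)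
  obtain ⟨n, hmn, hxor⟩ := hforce x'' fun i hi => hx''cyl i hi
  exact hx''C n hmn hxor

/-- The set of codes `x` for which `(f, g)` is split only finitely often is meagre. -/
lemma meagre_bad {f g : ℕ → Cantor} (hd : Dense (Set.range f ∪ Set.range g))
    (hfg : ∀ n, f n ≠ g n) :
    IsMeagre {x : Cantor | ¬ ({n | Xor' (f n ∈ Acell x) (g n ∈ Acell x)}).Infinite} := by
  rw [isMeagre_iff_countable_union_isNowhereDense]
  refine ⟨Set.range fun m => closure (Cset f g m), ?_, countable_range _, ?_⟩
  · rintro t ⟨m, rfl⟩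
    exact (nwd_Cset hd hfg m).closure
  · intro x hx
    simp only [mem_setOf_eq, Set.not_infinite] at hx
    obtain ⟨m, hm⟩ := hx.bddAbove
    refine mem_sUnion.mpr ⟨closure (Cset f g (m + 1)), ⟨m + 1, rfl⟩, subset_closure ?_⟩
    intro n hn hxor
    have : n ≤ m := hm hxor
    omega

lemma covMeager_le_family {F : Set ((ℕ → Cantor) × (ℕ → Cantor))}
    (hF : CSNFamily {A : Set Cantor | IsOpen A} F) : covMeager ≤ #F := by
  classical
  set Bad : ((ℕ → Cantor) × (ℕ → Cantor)) → Set Cantor :=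
    fun p => {x : Cantor | ¬ ({n | Xor' (p.1 n ∈ Acell x) (p.2 n ∈ Acell x)}).Infinite}
    with hBaddef
  by_cases hcov : ⋃₀ (Bad '' F) = Set.univ
  · have h1 : covMeager ≤ #(Bad '' F) := by
      refine csInf_le' ⟨Bad '' F, ?_, hcov, rfl⟩
      rintro A ⟨p, hp, rfl⟩
      exact meagre_bad (hF.1 p hp) (hF.2.2.1 p hp)
    exact h1.trans Cardinal.mk_image_le
  · obtain ⟨x, hx⟩ := (Set.ne_univ_iff_exists_notMem _).mp hcov
    have hall : ∀ p ∈ F, ({n | Xor' (p.1 n ∈ Acell x) (p.2 n ∈ Acell x)}).Infinite := by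
      intro p hp
      by_contra h
      exact hx ⟨Bad p, ⟨p, hp, rfl⟩, h⟩
    have h4 := hF.2.2.2 (Acell x) (isOpen_Acell x)
    have heq : {p ∈ F | ({n | Xor' (p.1 n ∈ Acell x) (p.2 n ∈ Acell x)}).Infinite} = F := by
      ext p
      exact ⟨fun h => h.1, fun h => ⟨h, hall p h⟩⟩
    rw [heq] at h4
    exact absurd h4 (lt_irrefl _)

lemma meagre_singleton (z : Cantor) : IsMeagre ({z} : Set Cantor) := by
  rw [isMeagre_iff_countable_union_isNowhereDense]
  refine ⟨{({z} : Set Cantor)}, ?_, countable_singleton _, by simp⟩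
  rintro t ht
  rw [mem_singleton_iff] at ht
  subst ht
  rw [IsNowhereDense, closure_singleton, Set.eq_empty_iff_forall_notMem]
  intro y hy
  obtain ⟨j, hj⟩ := exists_cyl_subset isOpen_interior hy
  have hy' : Function.update y j (!(y j)) ∈ cyl y j := by
    intro i hi
    rw [Function.update_of_ne (Nat.ne_of_lt hi)]
  have h1 : y ∈ ({z} : Set Cantor) := interior_subset hy
  have h2 : Function.update y j (!(y j)) ∈ ({z} : Set Cantor) := interior_subset (hj hy')
  rw [mem_singleton_iff] at h1 h2
  have h3 : Function.update y j (!(y j)) = y := h2.trans h1.symm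
  have h4 := congrArg (fun w : Cantor => w j) h3
  simp only [Function.update_self] at h4
  simp at h4

lemma covMeager_le_continuum : covMeager ≤ 2 ^ ℵ₀ := by
  have h1 : covMeager ≤ #(Set.range fun z : Cantor => ({z} : Set Cantor)) := by
    refine csInf_le' ⟨_, ?_, ?_, rfl⟩
    · rintro A ⟨z, rfl⟩
      exact meagre_singleton z
    · ext w
      simp only [mem_sUnion, mem_range, mem_univ, iff_true]
      exact ⟨{w}, ⟨w, rfl⟩, rfl⟩
  have h2 : #(Set.range fun z : Cantor => ({z} : Set Cantor)) = #Cantor :=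
    Cardinal.mk_range_eq _ fun a b hab => Set.singleton_injective hab
  have h3 : #Cantor = 2 ^ ℵ₀ := by
    rw [show #Cantor = #(ℕ → Bool) from rfl, ← Cardinal.power_def, Cardinal.mk_bool,
      Cardinal.mk_nat]
  rw [h2, h3] at h1
  exact h1

end CSNProof

/-- `CSN(Σ⁰₁) ≥ cov(M)`. -/
theorem stmt8 : covMeager ≤ CSN {A : Set Cantor | IsOpen A} := by
  rw [CSN]
  split_ifs with h
  · refine le_csInf ?_ ?_
    · obtain ⟨F, hF⟩ := h
      exact ⟨#F, F, hF, rfl⟩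
    · rintro c ⟨F, hF, rfl⟩
      exact CSNProof.covMeager_le_family hF
  · exact le_trans CSNProof.covMeager_le_continuum (Order.le_succ _)
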